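/- There exists a commutative radical Banach algebra R such that the closure of R² equals R but R possesses a maximal ideal (necessarily of codimension 1). -/

import Mathlib

/-- A bundled commutative Banach algebra (not necessarily unital). -/
structure CommBanachAlgebra where
  carrier : Type
  [ring : NonUnitalNormedCommRing carrier]
  [normedSpace : NormedSpace ℂ carrier]
  [isScalarTower : IsScalarTower ℂ carrier carrier]
  [smulCommClass : SMulCommClass ℂ carrier carrier]
  [complete : CompleteSpace carrier]

attribute [instance] CommBanachAlgebra.ring CommBanachAlgebra.normedSpace
  CommBanachAlgebra.isScalarTower CommBanachAlgebra.smulCommClass CommBanachAlgebra.complete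

/-- `M` is an ideal of the (non-unital) commutative algebra `A`. -/
def IsIdeal {A : Type*} [NonUnitalCommRing A] [Module ℂ A] (M : Submodule ℂ A) : Prop :=
  ∀ a : A, ∀ x ∈ M, a * x ∈ M

/-- `M` is a maximal ideal of `A`. -/
def IsMaximalIdeal {A : Type*} [NonUnitalCommRing A] [Module ℂ A] (M : Submodule ℂ A) : Prop :=
  IsIdeal M ∧ M ≠ ⊤ ∧ ∀ N : Submodule ℂ A, IsIdeal N → M ≤ N → N = M ∨ N = ⊤

/-- `A²`: the linear span of all products `a * b`. -/
def sqIdeal (A : Type*) [NonUnitalCommRing A] [Module ℂ A] : Submodule ℂ A :=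
  Submodule.span ℂ {x : A | ∃ a b : A, x = a * b}

/-- `R` is a radical algebra: every element is quasi-invertible. -/
def IsRadicalAlgebra (R : Type*) [NonUnitalCommRing R] [Module ℂ R] : Prop :=
  ∀ a : R, ∃ b : R, a + b - a * b = 0


set_option maxHeartbeats 1000000
set_option synthInstance.maxHeartbeats 400000
noncomputable section
open MeasureTheory intervalIntegral Set Filter Topology

abbrev I01 : Set ℝ := Set.Icc (0:ℝ) 1

/-- extend a continuous function on `[0,1]` to `ℝ` by clamping. -/
def extC (f : C(I01, ℂ)) : ℝ → ℂ := fun t => f (Set.projIcc 0 1 zero_le_one t)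

lemma extC_continuous (f : C(I01, ℂ)) : Continuous (extC f) :=
  f.continuous.comp continuous_projIcc

lemma extC_norm_le (f : C(I01, ℂ)) (t : ℝ) : ‖extC f t‖ ≤ ‖f‖ :=
  f.norm_coe_le_norm _

lemma extC_of_mem (f : C(I01, ℂ)) {t : ℝ} (ht : t ∈ I01) : extC f t = f ⟨t, ht⟩ := by
  simp [extC, Set.projIcc_of_mem zero_le_one ht]

lemma extC_add (f g : C(I01, ℂ)) (t : ℝ) : extC (f + g) t = extC f t + extC g t := rfl
lemma extC_smul (c : ℂ) (f : C(I01, ℂ)) (t : ℝ) : extC (c • f) t = c • extC f t := rfl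

/-- the truncated convolution kernel is interval integrable. -/
lemma conv_integrable (f g : C(I01, ℂ)) (x a b : ℝ) :
    IntervalIntegrable (fun s => extC f s * extC g (x - s)) volume a b :=
  (((extC_continuous f).mul ((extC_continuous g).comp (continuous_const.sub continuous_id)))).intervalIntegrable _ _

/-- truncated convolution of continuous functions on `[0,1]`. -/
def conv (f g : C(I01, ℂ)) : C(I01, ℂ) :=
  ⟨fun x => ∫ s in (0:ℝ)..(x:ℝ), extC f s * extC g (x - s), by
    have h : Continuous (Function.uncurry fun (x : I01) (s : ℝ) =>
        extC f s * extC g ((x:ℝ) - s)) := by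
      apply ((extC_continuous f).comp continuous_snd).mul
      exact (extC_continuous g).comp ((continuous_subtype_val.comp continuous_fst).sub continuous_snd)
    exact intervalIntegral.continuous_parametric_intervalIntegral_of_continuous h
      continuous_subtype_val⟩

lemma conv_apply (f g : C(I01, ℂ)) (x : I01) :
    conv f g x = ∫ s in (0:ℝ)..(x:ℝ), extC f s * extC g (x - s) := rfl

lemma conv_comm (f g : C(I01, ℂ)) : conv f g = conv g f := by
  ext x
  rw [conv_apply, conv_apply]
  have := intervalIntegral.integral_comp_sub_left (a := (0:ℝ)) (b := (x:ℝ))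
    (fun s => extC f ((x:ℝ) - s) * extC g s) (x:ℝ)
  simp only [sub_self, sub_zero] at this
  rw [show (∫ s in (0:ℝ)..(x:ℝ), extC f s * extC g ((x:ℝ) - s)) =
      ∫ s in (0:ℝ)..(x:ℝ), extC f ((x:ℝ) - ((x:ℝ) - s)) * extC g ((x:ℝ) - s) by
    congr 1; ext s; rw [sub_sub_cancel], this]
  congr 1; ext s; rw [mul_comm]

open Function
open scoped Convolution

-- bilinearity
lemma conv_add_left (f g h : C(I01, ℂ)) : conv (f + g) h = conv f h + conv g h := by
  ext x
  simp only [conv_apply, ContinuousMap.add_apply]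
  rw [← intervalIntegral.integral_add (conv_integrable f h _ _ _) (conv_integrable g h _ _ _)]
  congr 1; ext s
  show (f + g) _ * _ = _
  simp [extC, add_mul]

lemma conv_add_right (f g h : C(I01, ℂ)) : conv f (g + h) = conv f g + conv f h := by
  ext x
  simp only [conv_apply, ContinuousMap.add_apply]
  rw [← intervalIntegral.integral_add (conv_integrable f g _ _ _) (conv_integrable f h _ _ _)]
  congr 1; ext s
  show _ * (g + h) _ = _
  simp [extC, mul_add]

lemma conv_smul_left (c : ℂ) (f g : C(I01, ℂ)) : conv (c • f) g = c • conv f g := by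
  ext x
  simp only [conv_apply, ContinuousMap.smul_apply]
  rw [← intervalIntegral.integral_smul]
  congr 1; ext s
  show (c • f) _ * _ = _
  simp [extC, ContinuousMap.smul_apply]; ring

lemma conv_smul_right (c : ℂ) (f g : C(I01, ℂ)) : conv f (c • g) = c • conv f g := by
  ext x
  simp only [conv_apply, ContinuousMap.smul_apply]
  rw [← intervalIntegral.integral_smul]
  congr 1; ext s
  show _ * (c • g) _ = _
  simp [extC, ContinuousMap.smul_apply]; ring

lemma conv_norm_apply_le (f g : C(I01, ℂ)) (x : I01) :
    ‖conv f g x‖ ≤ ‖f‖ * ‖g‖ * (x:ℝ) := by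
  rw [conv_apply]
  have h1 : (0:ℝ) ≤ (x:ℝ) := x.2.1
  have := intervalIntegral.norm_integral_le_of_norm_le_const
    (f := fun s => extC f s * extC g ((x:ℝ) - s)) (a := 0) (b := (x:ℝ)) (C := ‖f‖ * ‖g‖) ?_
  · calc _ ≤ ‖f‖*‖g‖*|(x:ℝ) - 0| := this
      _ = ‖f‖*‖g‖*(x:ℝ) := by rw [sub_zero, abs_of_nonneg h1]
  · intro s _
    calc ‖extC f s * extC g ((x:ℝ) - s)‖ = ‖extC f s‖ * ‖extC g ((x:ℝ)-s)‖ := norm_mul _ _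
      _ ≤ ‖f‖ * ‖g‖ := by
          apply mul_le_mul (extC_norm_le f s) (extC_norm_le g _) (norm_nonneg _) (norm_nonneg _)

lemma conv_norm_le (f g : C(I01, ℂ)) : ‖conv f g‖ ≤ ‖f‖ * ‖g‖ := by
  apply ContinuousMap.norm_le _ (by positivity) |>.2
  intro x
  calc ‖conv f g x‖ ≤ ‖f‖ * ‖g‖ * (x:ℝ) := conv_norm_apply_le f g x
    _ ≤ ‖f‖ * ‖g‖ * 1 := by
        apply mul_le_mul_of_nonneg_left x.2.2 (by positivity)
    _ = ‖f‖ * ‖g‖ := mul_one _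


/-- zero extension. -/
def ez (f : C(I01, ℂ)) : ℝ → ℂ := (Set.Icc (0:ℝ) 1).indicator (extC f)

abbrev Lmul : ℂ →L[ℝ] ℂ →L[ℝ] ℂ := ContinuousLinearMap.mul ℝ ℂ

lemma ez_measurable (f : C(I01, ℂ)) : Measurable (ez f) :=
  ((extC_continuous f).measurable).indicator measurableSet_Icc

lemma ez_norm_le (f : C(I01, ℂ)) (t : ℝ) : ‖ez f t‖ ≤ ‖f‖ := by
  unfold ez
  by_cases h : t ∈ Set.Icc (0:ℝ) 1
  · rw [Set.indicator_of_mem h]; exact extC_norm_le f t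
  · rw [Set.indicator_of_notMem h]; simp [norm_nonneg]

lemma ez_of_mem (f : C(I01, ℂ)) {t : ℝ} (ht : t ∈ Set.Icc (0:ℝ) 1) : ez f t = extC f t :=
  Set.indicator_of_mem ht _

lemma ez_of_not_mem (f : C(I01, ℂ)) {t : ℝ} (ht : t ∉ Set.Icc (0:ℝ) 1) : ez f t = 0 :=
  Set.indicator_of_notMem ht _

lemma integrable_aux {φ : ℝ → ℂ} (hφ : AEStronglyMeasurable φ volume) {C : ℝ}
    (hC : ∀ t, ‖φ t‖ ≤ C) (hsupp : ∀ t, t ∉ Set.Icc (0:ℝ) 1 → φ t = 0) :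
    Integrable φ volume := by
  refine Integrable.mono' (g := (Set.Icc (0:ℝ) 1).indicator (fun _ => C))
    ((integrable_indicator_iff measurableSet_Icc).2 ?_) hφ ?_
  · exact integrableOn_const measure_Icc_lt_top.ne
  · filter_upwards with t
    by_cases h : t ∈ Set.Icc (0:ℝ) 1
    · rw [Set.indicator_of_mem h]; exact hC t
    · rw [Set.indicator_of_notMem h, hsupp t h]; simp

lemma convExistsAt (f g : C(I01, ℂ)) (x : ℝ) :
    ConvolutionExistsAt (ez f) (ez g) x Lmul volume := by
  apply integrable_aux
  · exact (((ez_measurable f).mul ((ez_measurable g).comp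
      (measurable_const.sub measurable_id)))).aestronglyMeasurable
  · intro t
    show ‖ez f t * ez g (x - t)‖ ≤ ‖f‖ * ‖g‖
    rw [norm_mul]
    exact mul_le_mul (ez_norm_le f t) (ez_norm_le g _) (norm_nonneg _) (norm_nonneg _)
  · intro t ht
    show ez f t * ez g (x - t) = 0
    rw [ez_of_not_mem f ht, zero_mul]

lemma ezconv_eq (f g : C(I01, ℂ)) {x : ℝ} (hx : x ∈ I01) :
    (ez f ⋆[Lmul, volume] ez g) x = ∫ s in (0:ℝ)..x, extC f s * extC g (x - s) := by
  have key : (fun t => Lmul (ez f t) (ez g (x - t))) =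
      (Set.Icc (0:ℝ) x).indicator (fun t => extC f t * extC g (x - t)) := by
    funext t
    show ez f t * ez g (x - t) = _
    by_cases ht : t ∈ Set.Icc (0:ℝ) x
    · rw [Set.indicator_of_mem ht]
      have h1 : t ∈ Set.Icc (0:ℝ) 1 := ⟨ht.1, ht.2.trans hx.2⟩
      have h2 : x - t ∈ Set.Icc (0:ℝ) 1 := ⟨by linarith [ht.2], by linarith [ht.1, hx.2]⟩
      rw [ez_of_mem f h1, ez_of_mem g h2]
    · rw [Set.indicator_of_notMem ht]
      rw [Set.mem_Icc, not_and_or, not_le, not_le] at ht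
      rcases ht with h' | h'
      · rw [ez_of_not_mem f (fun hm => absurd hm.1 (not_le.2 h')), zero_mul]
      · rw [ez_of_not_mem g (fun hm => absurd hm.1 (not_le.2 (by linarith))), mul_zero]
  rw [MeasureTheory.convolution_def, key, MeasureTheory.integral_indicator measurableSet_Icc,
    MeasureTheory.integral_Icc_eq_integral_Ioc, intervalIntegral.integral_of_le hx.1]

lemma ezconv_neg (f g : C(I01, ℂ)) {x : ℝ} (hx : x < 0) :
    (ez f ⋆[Lmul, volume] ez g) x = 0 := by
  rw [MeasureTheory.convolution_def]
  have : (fun t => Lmul (ez f t) (ez g (x - t))) = fun _ => (0:ℂ) := by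
    funext t
    show ez f t * ez g (x - t) = 0
    by_cases ht : t ∈ Set.Icc (0:ℝ) 1
    · rw [ez_of_not_mem g (fun hm => absurd hm.1 (not_le.2 (by linarith [ht.1]))), mul_zero]
    · rw [ez_of_not_mem f ht, zero_mul]
  rw [this, MeasureTheory.integral_zero]

lemma ez_conv_eq_ezconv (f g : C(I01, ℂ)) {t : ℝ} (ht : t ∈ Set.Icc (0:ℝ) 1) :
    ez (conv f g) t = (ez f ⋆[Lmul, volume] ez g) t := by
  rw [ez_of_mem _ ht, ezconv_eq f g ht]
  unfold extC
  rw [Set.projIcc_of_mem zero_le_one ht, conv_apply]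
  rfl

lemma conv_assoc (f g h : C(I01, ℂ)) : conv (conv f g) h = conv f (conv g h) := by
  ext x
  have hx : (x:ℝ) ∈ I01 := x.2
  have e1 : conv (conv f g) h x = ((ez f ⋆[Lmul, volume] ez g) ⋆[Lmul, volume] ez h) (x:ℝ) := by
    rw [conv_apply, ← ezconv_eq (conv f g) h hx]
    rw [MeasureTheory.convolution_def, MeasureTheory.convolution_def]
    congr 1
    funext t
    show ez (conv f g) t * ez h ((x:ℝ) - t) = (ez f ⋆[Lmul, volume] ez g) t * ez h ((x:ℝ) - t)
    by_cases ht : t ∈ Set.Icc (0:ℝ) 1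
    · rw [ez_conv_eq_ezconv f g ht]
    · have ht2 := ht
      rw [Set.mem_Icc, not_and_or, not_le, not_le] at ht2
      rcases ht2 with h' | h'
      · simp [ez_of_not_mem _ ht, ezconv_neg f g h']
      · have : (x:ℝ) - t < 0 := by linarith [hx.2]
        simp [ez_of_not_mem h (fun hm => absurd hm.1 (not_le.2 this))]
  have e2 : conv f (conv g h) x = (ez f ⋆[Lmul, volume] (ez g ⋆[Lmul, volume] ez h)) (x:ℝ) := by
    rw [conv_apply, ← ezconv_eq f (conv g h) hx]
    rw [MeasureTheory.convolution_def, MeasureTheory.convolution_def]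
    congr 1
    funext t
    show ez f t * ez (conv g h) ((x:ℝ) - t) = ez f t * (ez g ⋆[Lmul, volume] ez h) ((x:ℝ) - t)
    by_cases ht : (x:ℝ) - t ∈ Set.Icc (0:ℝ) 1
    · rw [ez_conv_eq_ezconv g h ht]
    · have ht2 := ht
      rw [Set.mem_Icc, not_and_or, not_le, not_le] at ht2
      rcases ht2 with h' | h'
      · simp [ez_of_not_mem _ ht, ezconv_neg g h h']
      · have : t < 0 := by linarith [hx.2]
        simp [ez_of_not_mem f (fun hm => absurd hm.1 (not_le.2 this))]
  rw [e1, e2]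
  apply MeasureTheory.convolution_assoc' Lmul Lmul Lmul Lmul
    (fun a b c => mul_assoc a b c)
  · filter_upwards with y using convExistsAt f g y
  · filter_upwards with y using convExistsAt g h y
  · -- joint integrability
    have hmeas : AEStronglyMeasurable
        (uncurry fun (a b : ℝ) => ez f b * (ez g (a - b) * ez h ((x:ℝ) - a)))
        (volume.prod volume) := by
      apply Measurable.aestronglyMeasurable
      apply ((ez_measurable f).comp measurable_snd).mul
      apply (((ez_measurable g).comp (measurable_fst.sub measurable_snd))).mul
      exact (ez_measurable h).comp (measurable_const.sub measurable_fst)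
    refine Integrable.mono' (g := (Set.Icc ((x:ℝ)-1) (x:ℝ) ×ˢ Set.Icc (0:ℝ) 1).indicator
      (fun _ => ‖f‖ * (‖g‖ * ‖h‖))) ?_ hmeas ?_
    · rw [integrable_indicator_iff (measurableSet_Icc.prod measurableSet_Icc)]
      refine integrableOn_const ?_
      rw [Measure.prod_prod]
      exact (ENNReal.mul_lt_top measure_Icc_lt_top measure_Icc_lt_top).ne
    · filter_upwards with p
      rcases p with ⟨a, b⟩
      show ‖ez f b * (ez g (a - b) * ez h ((x:ℝ) - a))‖ ≤ _
      by_cases hp : (a, b) ∈ Set.Icc ((x:ℝ)-1) (x:ℝ) ×ˢ Set.Icc (0:ℝ) 1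
      · rw [Set.indicator_of_mem hp]
        rw [norm_mul, norm_mul]
        apply mul_le_mul (ez_norm_le f b) _ (by positivity) (norm_nonneg _)
        exact mul_le_mul (ez_norm_le g _) (ez_norm_le h _) (norm_nonneg _) (norm_nonneg _)
      · rw [Set.indicator_of_notMem hp]
        rw [Set.mem_prod, not_and_or] at hp
        rcases hp with h' | h'
        · have : (x:ℝ) - a ∉ Set.Icc (0:ℝ) 1 := by
            rw [Set.mem_Icc, not_and_or, not_le, not_le] at h' ⊢
            rcases h' with h' | h'
            · right; linarith
            · left; linarith
          simp [ez_of_not_mem h this]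
        · simp [ez_of_not_mem f h']


def pt0 : I01 := ⟨0, by norm_num⟩

def V0 : Submodule ℂ C(I01, ℂ) where
  carrier := {f | f pt0 = 0}
  add_mem' := by intro a b ha hb; simp_all [Set.mem_setOf_eq]
  zero_mem' := rfl
  smul_mem' := by intro c a ha; simp_all [Set.mem_setOf_eq]

lemma conv_mem (f g : C(I01, ℂ)) : conv f g ∈ V0 := by
  show conv f g pt0 = 0
  rw [conv_apply]
  show ∫ s in (0:ℝ)..(0:ℝ), _ = 0
  exact intervalIntegral.integral_same

abbrev RV : Type := ↥V0

instance : NonUnitalNormedCommRing RV :=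
  { (inferInstance : NormedAddCommGroup RV) with
    mul := fun a b => ⟨conv a.1 b.1, conv_mem _ _⟩
    mul_assoc := fun a b c => Subtype.ext (conv_assoc a.1 b.1 c.1)
    left_distrib := fun a b c => Subtype.ext (conv_add_right a.1 b.1 c.1)
    right_distrib := fun a b c => Subtype.ext (conv_add_left a.1 b.1 c.1)
    zero_mul := fun a => Subtype.ext (by
      show conv 0 a.1 = 0
      have h0 := conv_add_left 0 0 a.1
      rw [add_zero] at h0
      exact add_eq_right.mp h0.symm)
    mul_zero := fun a => Subtype.ext (by
      show conv a.1 0 = 0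
      have h0 := conv_add_right a.1 0 0
      rw [add_zero] at h0
      exact add_eq_right.mp h0.symm)
    mul_comm := fun a b => Subtype.ext (conv_comm a.1 b.1)
    norm_mul_le := fun a b => conv_norm_le a.1 b.1 }

lemma mul_def (a b : RV) : a * b = ⟨conv a.1 b.1, conv_mem _ _⟩ := rfl

instance : IsScalarTower ℂ RV RV :=
  ⟨fun c a b => Subtype.ext (conv_smul_left c a.1 b.1)⟩

instance : SMulCommClass ℂ RV RV :=
  ⟨fun c a b => Subtype.ext (conv_smul_right c a.1 b.1).symm⟩

lemma V0_closed : IsClosed (V0 : Set C(I01, ℂ)) := by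
  have : (V0 : Set C(I01, ℂ)) = (fun f : C(I01,ℂ) => f pt0) ⁻¹' {0} := rfl
  rw [this]
  exact isClosed_singleton.preimage (continuous_eval_const pt0)

instance : CompleteSpace RV := V0_closed.completeSpace_coe

example : NormedSpace ℂ RV := inferInstance


-- pointwise factorial bound
lemma conv_pointwise_bound (f g : C(I01, ℂ)) {C : ℝ} (hC : 0 ≤ C) {n : ℕ}
    (hg : ∀ t : I01, ‖g t‖ ≤ C * (t:ℝ)^n / n.factorial) (x : I01) :
    ‖conv f g x‖ ≤ ‖f‖ * C * (x:ℝ)^(n+1) / (n+1).factorial := by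
  rw [conv_apply]
  have hx0 : (0:ℝ) ≤ (x:ℝ) := x.2.1
  have hx1 : (x:ℝ) ≤ 1 := x.2.2
  have key : ‖∫ s in (0:ℝ)..(x:ℝ), extC f s * extC g ((x:ℝ) - s)‖ ≤
      |∫ s in (0:ℝ)..(x:ℝ), ‖f‖ * (C * ((x:ℝ) - s)^n / n.factorial)| := by
    apply intervalIntegral.norm_integral_le_abs_of_norm_le
    · rw [MeasureTheory.ae_restrict_iff' measurableSet_uIoc]
      filter_upwards with s hs
      rw [Set.uIoc_of_le hx0] at hs
      have hmem : (x:ℝ) - s ∈ I01 := ⟨by linarith [hs.2], by linarith [hs.1]⟩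
      rw [norm_mul, extC_of_mem g hmem]
      apply mul_le_mul (f.norm_coe_le_norm _) (hg ⟨_, hmem⟩) (norm_nonneg _) (norm_nonneg _)
    · apply Continuous.intervalIntegrable
      fun_prop
  have comp : ∫ s in (0:ℝ)..(x:ℝ), ‖f‖ * (C * ((x:ℝ) - s)^n / n.factorial) =
      ‖f‖ * C * (x:ℝ)^(n+1) / (n+1).factorial := by
    have e1 : ∫ s in (0:ℝ)..(x:ℝ), ((x:ℝ) - s)^n = (x:ℝ)^(n+1)/(n+1) := by
      have := intervalIntegral.integral_comp_sub_left (a := (0:ℝ)) (b := (x:ℝ))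
        (fun u => u^n) (x:ℝ)
      simp only [sub_self, sub_zero] at this
      rw [this, integral_pow]
      ring
    have e2 : (fun s => ‖f‖ * (C * ((x:ℝ) - s)^n / n.factorial)) =
        fun s => (‖f‖ * C / n.factorial) * ((x:ℝ) - s)^n := by funext s; ring
    rw [e2, intervalIntegral.integral_const_mul, e1, Nat.factorial_succ]
    push_cast
    rw [div_mul_div_comm]
    ring
  rw [comp] at key
  calc _ ≤ |‖f‖ * C * (x:ℝ)^(n+1) / (n+1).factorial| := key
    _ = _ := abs_of_nonneg (by positivity)

section Radical
variable (a : RV)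

/-- `apow a n = a^(n+1)`. -/
def apow : ℕ → RV
  | 0 => a
  | n+1 => a * apow n

lemma norm_RV (b : RV) : ‖b‖ = ‖b.1‖ := rfl

lemma apow_pointwise (n : ℕ) (t : I01) :
    ‖(apow a n).1 t‖ ≤ ‖a‖^(n+1) * (t:ℝ)^n / n.factorial := by
  induction n generalizing t with
  | zero =>
    show ‖a.1 t‖ ≤ _
    simp only [zero_add, pow_one, pow_zero, mul_one, Nat.factorial_zero, Nat.cast_one, div_one]
    exact (a.1 : C(I01,ℂ)).norm_coe_le_norm t
  | succ n ih =>
    show ‖conv a.1 (apow a n).1 t‖ ≤ _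
    have h := conv_pointwise_bound a.1 (apow a n).1 (C := ‖a‖^(n+1)) (by positivity)
      (fun u => ih u) t
    calc ‖conv a.1 (apow a n).1 t‖ ≤ ‖a.1‖ * ‖a‖^(n+1) * (t:ℝ)^(n+1) / (n+1).factorial := h
      _ = ‖a‖^(n+2) * (t:ℝ)^(n+1) / (n+1).factorial := by
          rw [show ‖a.1‖ = ‖a‖ from rfl]; ring

lemma apow_norm_le (n : ℕ) : ‖apow a n‖ ≤ ‖a‖^(n+1) / n.factorial := by
  rw [norm_RV]
  apply (ContinuousMap.norm_le _ (by positivity)).2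
  intro t
  calc ‖(apow a n).1 t‖ ≤ ‖a‖^(n+1) * (t:ℝ)^n / n.factorial := apow_pointwise a n t
    _ ≤ ‖a‖^(n+1) * 1 / n.factorial := by
        gcongr
        exact pow_le_one₀ t.2.1 t.2.2
    _ = ‖a‖^(n+1) / n.factorial := by ring

lemma apow_summable : Summable (apow a) := by
  apply Summable.of_norm
  apply Summable.of_nonneg_of_le (fun n => norm_nonneg _) (fun n => apow_norm_le a n)
  have h := (Real.summable_pow_div_factorial ‖a‖).mul_left ‖a‖
  apply h.congr
  intro n
  rw [pow_succ]
  ring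

lemma radical_RV : ∀ a : RV, ∃ b : RV, a + b - a * b = 0 := by
  intro a
  refine ⟨-∑' n, apow a n, ?_⟩
  have hs := apow_summable a
  have hmul : a * ∑' n, apow a n = ∑' n, apow a (n+1) := by
    rw [← Summable.tsum_mul_left a hs]
    exact tsum_congr fun n => rfl
  have h0 : ∑' n, apow a n = a + ∑' n, apow a (n+1) := Summable.tsum_eq_zero_add hs
  rw [mul_neg, hmul, h0]
  abel

end Radical

section Density

/-- quadratic spike of mass 1 on `[0,δ]`. -/
def wfn (δ : ℝ) : ℝ → ℝ := fun u => (6/δ^3) * max (u*(δ - u)) 0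

lemma wfn_continuous (δ : ℝ) : Continuous (wfn δ) := by
  unfold wfn; fun_prop

lemma wfn_nonneg {δ : ℝ} (hδ : 0 < δ) (u : ℝ) : 0 ≤ wfn δ u :=
  mul_nonneg (by positivity) (le_max_right _ _)

lemma wfn_zero_of_ge {δ u : ℝ} (hδ : 0 < δ) (hu : δ ≤ u) : wfn δ u = 0 := by
  have h1 : u * (δ - u) ≤ 0 := by nlinarith
  simp [wfn, max_eq_right h1]

lemma wfn_integrable (δ a b : ℝ) : IntervalIntegrable (wfn δ) volume a b :=
  (wfn_continuous δ).intervalIntegrable a b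

lemma wfn_integral_full {δ : ℝ} (hδ : 0 < δ) : ∫ u in (0:ℝ)..δ, wfn δ u = 1 := by
  have h1 : ∫ u in (0:ℝ)..δ, wfn δ u = ∫ u in (0:ℝ)..δ, (6/δ^3) * (u*δ - u^2) := by
    apply intervalIntegral.integral_congr
    intro u hu
    rw [Set.uIcc_of_le hδ.le] at hu
    have : 0 ≤ u * (δ - u) := mul_nonneg hu.1 (by linarith [hu.2])
    show (6/δ^3) * max (u*(δ - u)) 0 = _
    rw [max_eq_left this]
    ring
  rw [h1, intervalIntegral.integral_const_mul]
  have hi1 : IntervalIntegrable (fun u : ℝ => u * δ) volume 0 δ := by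
    apply Continuous.intervalIntegrable; fun_prop
  have hi2 : IntervalIntegrable (fun u : ℝ => u ^ 2) volume 0 δ := by
    apply Continuous.intervalIntegrable; fun_prop
  rw [intervalIntegral.integral_sub hi1 hi2]
  have h2 : ∫ u in (0:ℝ)..δ, u * δ = δ^2/2 * δ := by
    rw [intervalIntegral.integral_mul_const, integral_id]
    ring
  rw [h2, integral_pow]
  field_simp
  ring

lemma wfn_integral_le_one {δ t : ℝ} (hδ : 0 < δ) (ht0 : 0 ≤ t) (ht : t ≤ δ) :
    ∫ u in (0:ℝ)..t, wfn δ u ≤ 1 := by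
  have hsplit : (∫ u in (0:ℝ)..t, wfn δ u) + ∫ u in t..δ, wfn δ u = 1 := by
    rw [intervalIntegral.integral_add_adjacent_intervals (wfn_integrable δ _ _)
      (wfn_integrable δ _ _), wfn_integral_full hδ]
  have h2 : 0 ≤ ∫ u in t..δ, wfn δ u :=
    intervalIntegral.integral_nonneg ht (fun u _ => wfn_nonneg hδ u)
  linarith

lemma wfn_integral_nonneg {δ t : ℝ} (hδ : 0 < δ) (ht0 : 0 ≤ t) :
    0 ≤ ∫ u in (0:ℝ)..t, wfn δ u :=
  intervalIntegral.integral_nonneg ht0 (fun u _ => wfn_nonneg hδ u)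

lemma wfn_integral_eq_one {δ t : ℝ} (hδ : 0 < δ) (ht : δ ≤ t) :
    ∫ u in (0:ℝ)..t, wfn δ u = 1 := by
  have hsplit : (∫ u in (0:ℝ)..δ, wfn δ u) + ∫ u in δ..t, wfn δ u
      = ∫ u in (0:ℝ)..t, wfn δ u :=
    intervalIntegral.integral_add_adjacent_intervals (wfn_integrable δ _ _)
      (wfn_integrable δ _ _)
  have h2 : ∫ u in δ..t, wfn δ u = 0 := by
    have : ∫ u in δ..t, wfn δ u = ∫ u in δ..t, (0:ℝ) := by
      apply intervalIntegral.integral_congr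
      intro u hu
      rw [Set.uIcc_of_le ht] at hu
      exact wfn_zero_of_ge hδ hu.1
    rw [this, intervalIntegral.integral_zero]
  rw [← hsplit, h2, wfn_integral_full hδ, add_zero]

/-- the spike as an element of `RV`. -/
def spike (δ : ℝ) : RV :=
  ⟨⟨fun x => ((wfn δ (x:ℝ) : ℝ) : ℂ), by
      exact Complex.continuous_ofReal.comp ((wfn_continuous δ).comp continuous_subtype_val)⟩, by
    show ((wfn δ ((pt0 : I01):ℝ) : ℝ) : ℂ) = 0
    show ((wfn δ 0 : ℝ) : ℂ) = 0
    simp [wfn]⟩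

lemma approx_identity (a : RV) {ε : ℝ} (hε : 0 < ε) : ∃ e : RV, ‖e * a - a‖ ≤ 2*ε := by
  set A := extC a.1 with hA_def
  have hAuc : UniformContinuous A :=
    (CompactSpace.uniformContinuous_of_continuous a.1.continuous).comp
      (LipschitzWith.projIcc zero_le_one).uniformContinuous
  obtain ⟨δ0, hδ0pos, hδ0⟩ := Metric.uniformContinuous_iff.1 hAuc ε hε
  set δ := min (δ0/2) 1 with hδdef
  have hδpos : 0 < δ := lt_min (by linarith) one_pos
  have hδ1 : δ ≤ 1 := min_le_right _ _
  have hδ0' : δ < δ0 := lt_of_le_of_lt (min_le_left _ _) (by linarith)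
  have hA0 : A 0 = 0 := by
    show extC a.1 0 = 0
    rw [extC_of_mem a.1 (by norm_num : (0:ℝ) ∈ I01)]
    exact a.2
  have hAnear : ∀ s t : ℝ, |s - t| < δ0 → ‖A s - A t‖ < ε := by
    intro s t h
    have := hδ0 (a := s) (b := t) (by rwa [Real.dist_eq])
    rwa [dist_eq_norm] at this
  refine ⟨spike δ, ?_⟩
  have key : ∀ x : I01, ‖(conv (spike δ).1 a.1 - a.1) x‖ ≤ 2*ε := by
    intro x
    set t : ℝ := (x:ℝ) with ht_def
    have ht0 : 0 ≤ t := x.2.1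
    have ht1 : t ≤ 1 := x.2.2
    set J := ∫ u in (0:ℝ)..t, wfn δ u with hJ_def
    have hJ0 : 0 ≤ J := wfn_integral_nonneg hδpos ht0
    have hJ1 : J ≤ 1 := by
      rcases le_or_gt t δ with h | h
      · exact wfn_integral_le_one hδpos ht0 h
      · rw [hJ_def, wfn_integral_eq_one hδpos h.le]
    -- rewrite the convolution integrand
    have step1 : conv (spike δ).1 a.1 x = ∫ u in (0:ℝ)..t, ((wfn δ u : ℝ) : ℂ) * A (t - u) := by
      rw [conv_apply]
      apply intervalIntegral.integral_congr
      intro u hu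
      rw [Set.uIcc_of_le ht0] at hu
      have hu01 : u ∈ I01 := ⟨hu.1, hu.2.trans ht1⟩
      show extC (spike δ).1 u * extC a.1 ((x:ℝ) - u) = _
      rw [extC_of_mem _ hu01]
      rfl
    have hint1 : IntervalIntegrable (fun u => ((wfn δ u : ℝ):ℂ) * A (t - u)) volume 0 t := by
      apply Continuous.intervalIntegrable
      exact (Complex.continuous_ofReal.comp (wfn_continuous δ)).mul
        ((extC_continuous a.1).comp (continuous_const.sub continuous_id))
    have hint2 : IntervalIntegrable (fun u => ((wfn δ u : ℝ):ℂ) * A t) volume 0 t := by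
      apply Continuous.intervalIntegrable
      exact (Complex.continuous_ofReal.comp (wfn_continuous δ)).mul continuous_const
    have hax : a.1 x = A t := by
      rw [hA_def, extC_of_mem a.1 x.2]
    have step2 : (conv (spike δ).1 a.1 - a.1) x =
        (∫ u in (0:ℝ)..t, ((wfn δ u : ℝ):ℂ) * (A (t - u) - A t)) + ((J:ℂ) - 1) * A t := by
      have e3 : ∫ u in (0:ℝ)..t, ((wfn δ u : ℝ):ℂ) * (A (t - u) - A t)
          = (∫ u in (0:ℝ)..t, ((wfn δ u : ℝ):ℂ) * A (t - u)) - (J:ℂ) * A t := by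
        have : (fun u => ((wfn δ u : ℝ):ℂ) * (A (t - u) - A t)) =
            fun u => ((wfn δ u : ℝ):ℂ) * A (t - u) - ((wfn δ u : ℝ):ℂ) * A t := by
          funext u; ring
        rw [this, intervalIntegral.integral_sub hint1 hint2,
          intervalIntegral.integral_mul_const, intervalIntegral.integral_ofReal]
      show conv (spike δ).1 a.1 x - a.1 x = _
      rw [step1, hax, e3]
      ring
    rw [step2]
    have bound1 : ‖∫ u in (0:ℝ)..t, ((wfn δ u : ℝ):ℂ) * (A (t - u) - A t)‖ ≤ ε := by
      have hb : ‖∫ u in (0:ℝ)..t, ((wfn δ u : ℝ):ℂ) * (A (t - u) - A t)‖ ≤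
          |∫ u in (0:ℝ)..t, wfn δ u * ε| := by
        apply intervalIntegral.norm_integral_le_abs_of_norm_le
        · rw [MeasureTheory.ae_restrict_iff' measurableSet_uIoc]
          filter_upwards with u hu
          rw [Set.uIoc_of_le ht0] at hu
          rw [norm_mul, Complex.norm_real, Real.norm_eq_abs, abs_of_nonneg (wfn_nonneg hδpos u)]
          rcases le_or_gt u δ with h | h
          · apply mul_le_mul_of_nonneg_left _ (wfn_nonneg hδpos u)
            apply le_of_lt
            apply hAnear
            rw [show t - u - t = -u by ring, abs_neg, abs_of_nonneg hu.1.le]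
            exact lt_of_le_of_lt h hδ0'
          · rw [wfn_zero_of_ge hδpos h.le, zero_mul, zero_mul]
        · exact ((wfn_continuous δ).mul continuous_const).intervalIntegrable _ _
      rw [intervalIntegral.integral_mul_const] at hb
      calc _ ≤ |J * ε| := hb
        _ = J * ε := abs_of_nonneg (mul_nonneg hJ0 hε.le)
        _ ≤ 1 * ε := by gcongr
        _ = ε := one_mul ε
    have bound2 : ‖((J:ℂ) - 1) * A t‖ ≤ ε := by
      rcases le_or_gt δ t with h | h
      · rw [hJ_def, wfn_integral_eq_one hδpos h]
        simp [hε.le]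
      · rw [norm_mul]
        have h1 : ‖(J:ℂ) - 1‖ ≤ 1 := by
          rw [show ((J:ℂ) - 1) = ((J - 1 : ℝ) : ℂ) by push_cast; ring, Complex.norm_real,
            Real.norm_eq_abs, abs_of_nonpos (by linarith)]
          linarith
        have h2 : ‖A t‖ ≤ ε := by
          have := hAnear t 0 (by rw [sub_zero, abs_of_nonneg ht0]; linarith)
          rw [hA0, sub_zero] at this
          linarith
        calc ‖(J:ℂ) - 1‖ * ‖A t‖ ≤ 1 * ε := by
              apply mul_le_mul h1 h2 (norm_nonneg _) one_pos.le
          _ = ε := one_mul ε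
    calc ‖_ + _‖ ≤ _ + _ := norm_add_le _ _
      _ ≤ ε + ε := add_le_add bound1 bound2
      _ = 2*ε := by ring
  show ‖((spike δ * a - a : RV) : C(I01,ℂ))‖ ≤ 2*ε
  apply (ContinuousMap.norm_le _ (by positivity)).2
  exact key

end Density

lemma sq_dense : closure ((sqIdeal RV : Submodule ℂ RV) : Set RV) = Set.univ := by
  apply Set.eq_univ_of_forall
  intro a
  rw [Metric.mem_closure_iff]
  intro r hr
  obtain ⟨e, he⟩ := approx_identity a (ε := r/5) (by linarith)
  refine ⟨e * a, Submodule.subset_span ⟨e, a, rfl⟩, ?_⟩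
  rw [dist_eq_norm, norm_sub_rev]
  calc ‖e*a - a‖ ≤ 2*(r/5) := he
    _ < r := by linarith

/-- the identity function, an element of `RV`. -/
def w0 : RV := ⟨⟨fun x => ((x:ℝ):ℂ), by fun_prop⟩, by
  show (((pt0:I01):ℝ):ℂ) = 0
  norm_num [pt0]⟩

def Pprop (h : RV) : Prop :=
  Tendsto (fun t : ℝ => ‖extC h.1 t‖ / t) (𝓝[>] (0:ℝ)) (𝓝 0)

lemma Pprop_mul (f g : RV) : Pprop (f * g) := by
  unfold Pprop
  rw [Metric.tendsto_nhdsWithin_nhds]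
  intro ε hε
  set F := extC f.1 with hF_def
  set G := ‖g.1‖ with hG_def
  have hG0 : 0 ≤ G := norm_nonneg _
  set ε' := ε / (2*(G+1)) with hε'_def
  have hε'pos : 0 < ε' := by positivity
  have hF0 : F 0 = 0 := by
    rw [hF_def, extC_of_mem f.1 (by norm_num : (0:ℝ) ∈ I01)]
    exact f.2
  obtain ⟨δ₁, hδ₁pos, hδ₁⟩ := Metric.continuousAt_iff.1 (extC_continuous f.1).continuousAt ε' hε'pos
  refine ⟨min δ₁ 1, lt_min hδ₁pos one_pos, ?_⟩
  intro t htmem htd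
  have ht0 : 0 < t := htmem
  rw [Real.dist_eq, sub_zero, abs_of_pos ht0] at htd
  have ht1 : t ≤ 1 := le_of_lt (lt_of_lt_of_le htd (min_le_right _ _))
  have htδ : t < δ₁ := lt_of_lt_of_le htd (min_le_left _ _)
  have htI : t ∈ I01 := ⟨ht0.le, ht1⟩
  rw [Real.dist_eq, sub_zero]
  have hval : extC (f * g).1 t = conv f.1 g.1 ⟨t, htI⟩ := extC_of_mem _ htI
  have hbound : ‖conv f.1 g.1 ⟨t, htI⟩‖ ≤ ε' * G * t := by
    rw [conv_apply]
    have := intervalIntegral.norm_integral_le_of_norm_le_const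
      (f := fun u => extC f.1 u * extC g.1 (((⟨t, htI⟩ : I01):ℝ) - u)) (a := 0) (b := t)
      (C := ε' * G) ?_
    · calc _ ≤ ε' * G * |t - 0| := this
        _ = ε' * G * t := by rw [sub_zero, abs_of_pos ht0]
    · intro u hu
      rw [Set.uIoc_of_le ht0.le] at hu
      rw [norm_mul]
      have h1 : ‖extC f.1 u‖ ≤ ε' := by
        have := hδ₁ (x := u) (by
          rw [Real.dist_eq, sub_zero, abs_of_pos hu.1]
          exact lt_of_le_of_lt hu.2 htδ)
        rw [hF_def] at hF0
        rw [dist_eq_norm, hF0, sub_zero] at this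
        exact this.le
      exact mul_le_mul h1 (extC_norm_le g.1 _) (norm_nonneg _) hε'pos.le
  have hdiv : ‖extC (f * g).1 t‖ / t ≤ ε' * G := by
    rw [hval, div_le_iff₀ ht0]
    exact hbound
  have hlt : ε' * G < ε := by
    calc ε' * G < ε' * (2*(G+1)) := by
          apply mul_lt_mul_of_pos_left (by linarith) hε'pos
      _ = ε := by rw [hε'_def]; field_simp
  calc |‖extC (f * g).1 t‖ / t| = ‖extC (f * g).1 t‖ / t := by
        rw [abs_of_nonneg (div_nonneg (norm_nonneg _) ht0.le)]
    _ ≤ ε' * G := hdiv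
    _ < ε := hlt

lemma w0_not_mem : w0 ∉ sqIdeal RV := by
  intro hmem
  have hP : Pprop w0 := by
    refine Submodule.span_induction (p := fun x _ => Pprop x) ?_ ?_ ?_ ?_ hmem
    · rintro x ⟨f, g, rfl⟩
      exact Pprop_mul f g
    · show Pprop 0
      have : (fun t : ℝ => ‖extC (0 : RV).1 t‖ / t) = fun _ => (0:ℝ) := by
        funext t
        show ‖extC (0 : C(I01,ℂ)) t‖ / t = 0
        simp [extC]
      unfold Pprop
      rw [this]
      exact tendsto_const_nhds
    · intro x y _ _ hx hy
      show Pprop (x + y)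
      have g0 : Tendsto (fun t:ℝ => ‖extC x.1 t‖ / t + ‖extC y.1 t‖ / t)
          (𝓝[>](0:ℝ)) (𝓝 0) := by
        have := hx.add hy
        rwa [add_zero] at this
      unfold Pprop
      refine squeeze_zero' ?_ ?_ g0
      · filter_upwards [self_mem_nhdsWithin] with t (ht : (0:ℝ) < t)
        exact div_nonneg (norm_nonneg _) ht.le
      · filter_upwards [self_mem_nhdsWithin] with t (ht : (0:ℝ) < t)
        show ‖extC (x + y).1 t‖ / t ≤ ‖extC x.1 t‖ / t + ‖extC y.1 t‖ / t
        rw [← add_div]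
        refine (div_le_div_iff_of_pos_right ht).2 ?_
        rw [show (x + y).1 = x.1 + y.1 from rfl, extC_add]
        exact norm_add_le _ _
    · intro c x _ hx
      show Pprop (c • x)
      have h1 := hx.const_mul ‖c‖
      rw [mul_zero] at h1
      unfold Pprop
      apply h1.congr
      intro t
      show ‖c‖ * (‖extC x.1 t‖ / t) = ‖extC (c • x).1 t‖ / t
      rw [show (c • x).1 = c • x.1 from rfl, extC_smul, norm_smul, mul_div_assoc]
  have h2 : Tendsto (fun t:ℝ => ‖extC w0.1 t‖ / t) (𝓝[>](0:ℝ)) (𝓝 1) := by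
    apply Tendsto.congr' _ (tendsto_const_nhds (x := (1:ℝ)))
    filter_upwards [Ioo_mem_nhdsGT_of_mem (by norm_num : (0:ℝ) ∈ Set.Ico (0:ℝ) 1)] with t ht
    have hmem' : t ∈ I01 := ⟨ht.1.le, ht.2.le⟩
    rw [extC_of_mem _ hmem']
    show (1:ℝ) = ‖((t:ℝ):ℂ)‖ / t
    rw [Complex.norm_real, Real.norm_eq_abs, abs_of_pos ht.1, div_self ht.1.ne']
  have := tendsto_nhds_unique hP h2
  norm_num at this

lemma exists_functional : ∃ φ : RV →ₗ[ℂ] ℂ, (∀ x ∈ sqIdeal RV, φ x = 0) ∧ φ w0 ≠ 0 := by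
  set p := sqIdeal RV with hp_def
  have hq0 : (Submodule.Quotient.mk w0 : RV ⧸ p) ≠ 0 := by
    intro h
    rw [Submodule.Quotient.mk_eq_zero] at h
    exact w0_not_mem h
  set q0 : RV ⧸ p := Submodule.Quotient.mk w0 with hq0_def
  obtain ⟨c, hc⟩ := Submodule.exists_isCompl (Submodule.span ℂ {q0})
  set prj := Submodule.linearProjOfIsCompl _ c hc with hprj_def
  set e := LinearEquiv.toSpanNonzeroSingleton ℂ (RV ⧸ p) q0 hq0 with he_def
  refine ⟨e.symm.toLinearMap ∘ₗ ((prj : (RV ⧸ p) →ₗ[ℂ] _) ∘ₗ p.mkQ), ?_, ?_⟩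
  · intro x hx
    have h0 : p.mkQ x = 0 := by
      rw [Submodule.mkQ_apply, Submodule.Quotient.mk_eq_zero]
      exact hx
    simp [h0]
  · simp only [LinearMap.comp_apply]
    have h1 : p.mkQ w0 = q0 := rfl
    have h2 : prj q0 = ⟨q0, Submodule.mem_span_singleton_self q0⟩ :=
      Submodule.linearProjOfIsCompl_apply_left hc ⟨q0, Submodule.mem_span_singleton_self q0⟩
    rw [h1, h2]
    intro h0
    have h3 : (⟨q0, Submodule.mem_span_singleton_self q0⟩ :
        Submodule.span ℂ {q0}) = 0 := by simpa using congrArg e h0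
    exact hq0 (congrArg Subtype.val h3)

theorem exists_radical_banach_algebra_dense_square_with_maximal_ideal :
    ∃ A : CommBanachAlgebra, IsRadicalAlgebra A.carrier ∧
      closure (sqIdeal A.carrier : Set A.carrier) = Set.univ ∧
      ∃ M : Submodule ℂ A.carrier, IsMaximalIdeal M ∧
        Module.finrank ℂ (A.carrier ⧸ M) = 1 := by
  refine ⟨⟨RV⟩, radical_RV, sq_dense, ?_⟩
  obtain ⟨φ, hφ0, hφw⟩ := exists_functional
  refine ⟨LinearMap.ker φ, ⟨?_, ?_, ?_⟩, ?_⟩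
  · -- ideal
    intro a x _
    exact LinearMap.mem_ker.2 (hφ0 _ (Submodule.subset_span ⟨a, x, rfl⟩))
  · -- proper
    intro h
    exact hφw (LinearMap.mem_ker.1 (Submodule.eq_top_iff'.mp h w0))
  · -- maximal
    intro N _ hMN
    by_cases hNM : N = LinearMap.ker φ
    · exact Or.inl hNM
    · right
      obtain ⟨y, hyN, hyK⟩ := SetLike.exists_of_lt (lt_of_le_of_ne hMN (Ne.symm hNM))
      have hφy : φ y ≠ 0 := fun h => hyK (LinearMap.mem_ker.2 h)
      rw [Submodule.eq_top_iff']
      intro z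
      have hz : z - (φ z / φ y) • y ∈ LinearMap.ker φ := by
        rw [LinearMap.mem_ker, map_sub, _root_.map_smul, smul_eq_mul, div_mul_cancel₀ _ hφy, sub_self]
      have hdecomp : z = (z - (φ z / φ y) • y) + (φ z / φ y) • y := by
        rw [sub_add_cancel]
      rw [hdecomp]
      exact N.add_mem (hMN hz) (N.smul_mem _ hyN)
  · -- codimension one
    have hsurj : Function.Surjective φ := by
      intro z
      refine ⟨(z / φ w0) • w0, ?_⟩
      rw [_root_.map_smul, smul_eq_mul, div_mul_cancel₀ _ hφw]
    have equiv := φ.quotKerEquivOfSurjective hsurj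
    rw [equiv.finrank_eq, Module.finrank_self]
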